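/- For positive integers s and L, define G_{L,s}(q) as the generating series whose coefficient of q^n is the number of partitions of n with smallest part exactly s and largest minus smallest part at most L, minus the number of partitions of n with smallest part at least s+1 and largest minus smallest part at most L. Define H_{L,s,k}(q) = q^s(1-q^k)/((1-q^s)(1-q^{s+1})⋯(1-q^{L+s})) − (1/((1-q^{s+1})⋯(1-q^{L+s})) − 1). Then G_{L,s}(q) = H_{L,s,L}(q)/(1-q^L) as formal power series. -/

import Mathlib

open PowerSeries Finset
namespace Stmt10Aux
noncomputable section
open scoped Classical
variable {α : Type*}
/-- indicator series -/
def indicatorSeries (α : Type*) [Semiring α] (s : Set ℕ) : PowerSeries α :=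
  PowerSeries.mk fun n => if n ∈ s then 1 else 0

theorem coeff_indicator (s : Set ℕ) [Semiring α] (n : ℕ) :
    coeff n (indicatorSeries α s) = if n ∈ s then 1 else 0 :=
  coeff_mk _ _

theorem coeff_indicator_pos (s : Set ℕ) [Semiring α] (n : ℕ) (h : n ∈ s) :
    coeff n (indicatorSeries α s) = 1 := by rw [coeff_indicator, if_pos h]

theorem coeff_indicator_neg (s : Set ℕ) [Semiring α] (n : ℕ) (h : n ∉ s) :
    coeff n (indicatorSeries α s) = 0 := by rw [coeff_indicator, if_neg h]

theorem constantCoeff_indicator (s : Set ℕ) [Semiring α] :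
    constantCoeff (indicatorSeries α s) = if 0 ∈ s then 1 else 0 :=
  rfl

theorem two_series (i : ℕ) [Semiring α] :
    1 + (X : PowerSeries α) ^ i.succ = indicatorSeries α {0, i.succ} := by
  ext n
  simp only [coeff_indicator, coeff_one, coeff_X_pow, Set.mem_insert_iff, Set.mem_singleton_iff,
    map_add]
  cases' n with d
  · simp [(Nat.succ_ne_zero i).symm]
  · simp [Nat.succ_ne_zero d]

theorem num_series' [Field α] (i : ℕ) :
    (1 - (X : PowerSeries α) ^ (i + 1))⁻¹ = indicatorSeries α {k | i + 1 ∣ k} := by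
  rw [PowerSeries.inv_eq_iff_mul_eq_one]
  · ext n
    cases n with
    | zero => simp [mul_sub, zero_pow, constantCoeff_indicator]
    | succ n =>
      simp only [coeff_one, if_false, mul_sub, mul_one, coeff_indicator,
        LinearMap.map_sub, reduceCtorEq]
      simp_rw [coeff_mul, coeff_X_pow, coeff_indicator, @boole_mul _ _ _ _]
      simp only [Set.mem_setOf_eq]
      rw [sum_ite, sum_ite]
      simp_rw [@filter_filter _ _ _ _ _, sum_const_zero, add_zero, sum_const, nsmul_eq_mul, mul_one,
        sub_eq_iff_eq_add, zero_add]
      symm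
      split_ifs with h
      · suffices #{a ∈ antidiagonal (n + 1) | i + 1 ∣ a.fst ∧ a.snd = i + 1} = 1 by
          convert congr_arg ((↑) : ℕ → α) this; norm_cast
        rw [card_eq_one]
        cases' h with p hp
        refine ⟨((i + 1) * (p - 1), i + 1), ?_⟩
        ext ⟨a₁, a₂⟩
        simp only [mem_filter, Prod.mk.injEq, Finset.HasAntidiagonal.mem_antidiagonal, mem_singleton]
        constructor
        · rintro ⟨a_left, ⟨a, rfl⟩, rfl⟩
          refine ⟨?_, rfl⟩
          rw [Nat.mul_sub_left_distrib, ← hp, ← a_left, mul_one, Nat.add_sub_cancel]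
        · rintro ⟨rfl, rfl⟩
          match p with
          | 0 => rw [mul_zero] at hp; cases hp
          | p + 1 => rw [hp]; simp [mul_add]
      · suffices #{a ∈ antidiagonal (n + 1) | i + 1 ∣ a.fst ∧ a.snd = i + 1} = 0 by
          convert congr_arg ((↑) : ℕ → α) this; norm_cast
        rw [card_eq_zero]
        apply eq_empty_of_forall_notMem
        simp only [Prod.forall, mem_filter, not_and, Finset.HasAntidiagonal.mem_antidiagonal]
        rintro _ h₁ h₂ ⟨a, rfl⟩ rfl
        apply h
        simp [← h₂]
  · simp [zero_pow]
theorem partialGF_prop (α : Type*) [CommSemiring α] (n : ℕ) (s : Finset ℕ) (hs : ∀ i ∈ s, 0 < i)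
    (c : ℕ → Set ℕ) (hc : ∀ i, i ∉ s → 0 ∈ c i) :
    #{p : n.Partition | (∀ j, p.parts.count j ∈ c j) ∧ ∀ j ∈ p.parts, j ∈ s} =
      coeff n (∏ i ∈ s, indicatorSeries α ((· * i) '' c i)) := by
  simp_rw [coeff_prod, coeff_indicator, prod_boole, sum_boole]
  apply congr_arg
  simp only [mem_univ, forall_true_left, not_and, not_forall, exists_prop,
    Set.mem_image, not_exists]
  set φ : (a : Nat.Partition n) →
    a ∈ filter (fun p ↦ (∀ (j : ℕ), Multiset.count j p.parts ∈ c j) ∧ ∀ j ∈ p.parts, j ∈ s) univ →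
    ℕ →₀ ℕ := fun p _ => {
      toFun := fun i => Multiset.count i p.parts • i
      support := Finset.filter (fun i => i ≠ 0) p.parts.toFinset
      mem_support_toFun := fun a => by
        simp only [smul_eq_mul, ne_eq, mul_eq_zero, Multiset.count_eq_zero]
        rw [not_or, not_not]
        simp only [Multiset.mem_toFinset, not_not, mem_filter] }
  refine Finset.card_bij φ ?_ ?_ ?_
  · intro a ha
    simp only [φ, not_forall, not_exists, not_and, exists_prop, mem_filter]
    rw [mem_finsuppAntidiag]
    dsimp only [ne_eq, smul_eq_mul, id_eq, eq_mpr_eq_cast, le_eq_subset, Finsupp.coe_mk]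
    simp only [mem_univ, forall_true_left, not_and, not_forall, exists_prop,
      mem_filter, true_and] at ha
    refine ⟨⟨?_, fun i ↦ ?_⟩, fun i _ ↦ ⟨a.parts.count i, ha.1 i, rfl⟩⟩
    · conv_rhs => simp [← a.parts_sum]
      rw [sum_multiset_count_of_subset _ s]
      · simp only [smul_eq_mul]
      · intro i
        simp only [Multiset.mem_toFinset, not_not, mem_filter]
        apply ha.2
    · simp only [ne_eq, Multiset.mem_toFinset, not_not, mem_filter, and_imp]
      exact fun hi _ ↦ ha.2 i hi
  · intro p₁ hp₁ p₂ hp₂ h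
    apply Nat.Partition.ext
    simp only [true_and, mem_univ, mem_filter] at hp₁ hp₂
    ext i
    simp only [φ, ne_eq, Multiset.mem_toFinset, not_not, smul_eq_mul, Finsupp.mk.injEq] at h
    by_cases hi : i = 0
    · rw [hi]
      rw [Multiset.count_eq_zero_of_notMem]
      · rw [Multiset.count_eq_zero_of_notMem]
        intro a; exact Nat.lt_irrefl 0 (hs 0 (hp₂.2 0 a))
      intro a; exact Nat.lt_irrefl 0 (hs 0 (hp₁.2 0 a))
    · rw [← mul_left_inj' hi]
      rw [funext_iff] at h
      exact h.2 i
  · simp only [φ, mem_filter, mem_finsuppAntidiag, mem_univ, exists_prop, true_and, and_assoc]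
    rintro f ⟨hf, hf₃, hf₄⟩
    have hf' : f ∈ finsuppAntidiag s n := mem_finsuppAntidiag.mpr ⟨hf, hf₃⟩
    simp only [mem_finsuppAntidiag] at hf'
    refine ⟨⟨∑ i ∈ s, Multiset.replicate (f i / i) i, ?_, ?_⟩, ?_, ?_, ?_⟩
    · intro i hi
      simp only [exists_prop, Multiset.mem_sum, mem_map, Function.Embedding.coeFn_mk] at hi
      rcases hi with ⟨t, ht, z⟩
      apply hs
      rwa [Multiset.eq_of_mem_replicate z]
    · simp_rw [Multiset.sum_sum, Multiset.sum_replicate, Nat.nsmul_eq_mul]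
      rw [← hf'.1]
      refine sum_congr rfl fun i hi => Nat.div_mul_cancel ?_
      rcases hf₄ i hi with ⟨w, _, hw₂⟩
      rw [← hw₂]
      exact dvd_mul_left _ _
    · intro i
      simp_rw [Multiset.count_sum', Multiset.count_replicate, sum_ite_eq']
      split_ifs with h
      · rcases hf₄ i h with ⟨w, hw₁, hw₂⟩
        rwa [← hw₂, Nat.mul_div_cancel _ (hs i h)]
      · exact hc _ h
    · intro i hi
      rw [Multiset.mem_sum] at hi
      rcases hi with ⟨j, hj₁, hj₂⟩
      rwa [Multiset.eq_of_mem_replicate hj₂]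
    · ext i
      simp_rw [Multiset.count_sum', Multiset.count_replicate, sum_ite_eq']
      simp only [ne_eq, Multiset.mem_toFinset, not_not, smul_eq_mul, ite_mul,
        zero_mul, Finsupp.coe_mk]
      split_ifs with h
      · apply Nat.div_mul_cancel
        rcases hf₄ i h with ⟨w, _, hw₂⟩
        apply Dvd.intro_left _ hw₂
      · apply symm
        rw [← Finsupp.notMem_support_iff]
        exact notMem_mono hf'.2 h

lemma num_series (m : ℕ) (hm : 0 < m) :
    (1 - (X : PowerSeries ℚ) ^ m)⁻¹ = indicatorSeries ℚ ((· * m) '' Set.univ) := by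
  obtain ⟨i, rfl⟩ := Nat.exists_eq_succ_of_ne_zero hm.ne'
  rw [num_series']
  have hset : ((· * i.succ) '' Set.univ : Set ℕ) = {k | i + 1 ∣ k} := by
    ext k
    constructor
    · rintro ⟨a, -, rfl⟩
      exact Dvd.intro_left a rfl
    · rintro ⟨c, rfl⟩
      exact ⟨c, Set.mem_univ _, mul_comm _ _⟩
  rw [hset]

lemma num_series_pos (m : ℕ) (hm : 0 < m) :
    indicatorSeries ℚ ((· * m) '' {k : ℕ | 0 < k}) = X ^ m * (1 - X ^ m)⁻¹ := by
  rw [num_series m hm, mul_comm]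
  ext n
  rw [coeff_indicator, coeff_mul_X_pow', ]
  by_cases h : m ≤ n
  · rw [if_pos h, coeff_indicator]
    by_cases h2 : ∃ a : ℕ, 0 < a ∧ a * m = n
    · obtain ⟨a, ha, rfl⟩ := h2
      have hA : (a * m) ∈ (· * m) '' {k : ℕ | 0 < k} := ⟨a, ha, rfl⟩
      have hB : (a * m - m) ∈ (· * m) '' (Set.univ : Set ℕ) :=
        ⟨a - 1, Set.mem_univ _, by show (a - 1) * m = a * m - m; rw [Nat.sub_mul, one_mul]⟩
      rw [if_pos hA, if_pos hB]
    · have hA : ¬ (n ∈ (· * m) '' {k : ℕ | 0 < k}) := by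
        rintro ⟨a, ha, rfl⟩; exact h2 ⟨a, ha, rfl⟩
      have hB : ¬ (n - m ∈ (· * m) '' (Set.univ : Set ℕ)) := by
        rintro ⟨a, -, ha⟩
        have ha' : a * m = n - m := ha
        exact h2 ⟨a + 1, Nat.succ_pos a, by rw [Nat.add_mul, one_mul]; omega⟩
      rw [if_neg hA, if_neg hB]
  · rw [if_neg h, if_neg]
    rintro ⟨a, ha, rfl⟩
    exact h (Nat.le_mul_of_pos_left m ha)

/-- product series for partitions with parts in (m, m+L] -/
def Fser (L m : ℕ) : PowerSeries ℚ := ∏ i ∈ range L, (1 - (X : PowerSeries ℚ) ^ (m + 1 + i))⁻¹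

/-- series for partitions with smallest part exactly m, parts in [m, m+L] -/
def Pser (L m : ℕ) : PowerSeries ℚ := X ^ m * (1 - (X : PowerSeries ℚ) ^ m)⁻¹ * Fser L m

lemma count_C (L m n : ℕ) :
    ((Finset.univ.filter fun p : Nat.Partition n =>
        ∀ j ∈ p.parts, m + 1 ≤ j ∧ j ≤ m + L).card : ℚ) = coeff n (Fser L m) := by
  have h := partialGF_prop ℚ n ((range L).map ⟨fun i => m + 1 + i, add_right_injective (m + 1)⟩)
    (fun i hi => by simp only [mem_map, mem_range, Function.Embedding.coeFn_mk] at hi; omega)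
    (fun _ => Set.univ) (fun _ _ => trivial)
  rw [Finset.prod_map] at h
  have hprod : (∏ i ∈ range L,
      indicatorSeries ℚ ((· * ((⟨fun i => m + 1 + i, add_right_injective (m + 1)⟩ :
        ℕ ↪ ℕ) i)) '' Set.univ)) = Fser L m := by
    refine prod_congr rfl fun i _ => ?_
    exact (num_series _ (by simp only [Function.Embedding.coeFn_mk]; omega)).symm
  rw [hprod] at h
  rw [← h]
  congr 2
  apply filter_congr
  intro p _
  simp only [Set.mem_univ, forall_const, true_and, mem_map, mem_range,
    Function.Embedding.coeFn_mk, forall_true_left]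
  constructor
  · intro hp j hj
    obtain ⟨hj1, hj2⟩ := hp j hj
    exact ⟨j - (m + 1), by omega, by omega⟩
  · intro hp j hj
    obtain ⟨i, hi, rfl⟩ := hp j hj
    omega

lemma count_A (L m n : ℕ) (hm : 0 < m) :
    ((Finset.univ.filter fun p : Nat.Partition n =>
        m ∈ p.parts ∧ ∀ j ∈ p.parts, m ≤ j ∧ j ≤ m + L).card : ℚ) =
      coeff n (Pser L m) := by
  have h := partialGF_prop ℚ n ((range (L + 1)).map ⟨fun i => m + i, add_right_injective m⟩)
    (fun i hi => by simp only [mem_map, mem_range, Function.Embedding.coeFn_mk] at hi; omega)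
    (fun i => if i = m then {k | 0 < k} else Set.univ)
    (fun i hi => by
      have hne : i ≠ m := by
        rintro rfl
        refine hi ?_
        simp only [mem_map, mem_range, Function.Embedding.coeFn_mk]
        exact ⟨0, by omega, by simp⟩
      show 0 ∈ (if i = m then ({k : ℕ | 0 < k} : Set ℕ) else Set.univ)
      rw [if_neg hne]
      trivial)
  rw [Finset.prod_map] at h
  simp only [Function.Embedding.coeFn_mk] at h
  have hprod : (∏ i ∈ range (L + 1),
      indicatorSeries ℚ ((· * (m + i)) ''
        (if m + i = m then {k | 0 < k} else Set.univ))) = Pser L m := by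
    rw [prod_range_succ']
    have h0 : (if m + 0 = m then ({k | 0 < k} : Set ℕ) else Set.univ) = {k | 0 < k} := by
      simp
    have hF : (∏ i ∈ range L,
        indicatorSeries ℚ ((· * (m + (i + 1))) ''
          (if m + (i + 1) = m then {k | 0 < k} else Set.univ))) = Fser L m := by
      rw [Fser]
      refine prod_congr rfl fun i _ => ?_
      have hrest : (if m + (i + 1) = m then ({k | 0 < k} : Set ℕ) else Set.univ) =
          Set.univ := by rw [if_neg]; omega
      have e : m + (i + 1) = m + 1 + i := by omega
      rw [hrest, e, num_series _ (by omega)]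
    rw [hF, h0]
    simp only [Nat.add_zero]
    rw [num_series_pos _ hm, Pser]
    ring
  rw [hprod] at h
  rw [← h]
  congr 2
  apply filter_congr
  intro p _
  simp only [mem_map, mem_range, Function.Embedding.coeFn_mk]
  constructor
  · rintro ⟨hmem, hp⟩
    refine ⟨fun j => ?_, fun j hj => ?_⟩
    · split_ifs with h'
      · subst h'
        simpa [Multiset.count_pos] using hmem
      · trivial
    · obtain ⟨hj1, hj2⟩ := hp j hj
      exact ⟨j - m, by omega, by omega⟩
  · rintro ⟨hcount, hp⟩
    have hmem : m ∈ p.parts := by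
      have := hcount m
      rw [if_pos rfl] at this
      exact Multiset.count_pos.mp this
    refine ⟨hmem, fun j hj => ?_⟩
    obtain ⟨i, hi, rfl⟩ := hp j hj
    omega

lemma const_fac (k : ℕ) (hk : 0 < k) : constantCoeff (1 - (X : PowerSeries ℚ) ^ k) = 1 := by
  rw [map_sub, map_one, map_pow, constantCoeff_X, zero_pow hk.ne', sub_zero]

lemma fac_mul_inv (k : ℕ) (hk : 0 < k) :
    (1 - (X : PowerSeries ℚ) ^ k) * (1 - X ^ k)⁻¹ = 1 :=
  PowerSeries.mul_inv_cancel _ (by rw [const_fac k hk]; exact one_ne_zero)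

lemma fac_ne (k : ℕ) (hk : 0 < k) : (1 - (X : PowerSeries ℚ) ^ k) ≠ 0 := fun h => by
  have := const_fac k hk
  rw [h, map_zero] at this
  exact zero_ne_one this

lemma const_prod (t : Finset ℕ) (e : ℕ → ℕ) (he : ∀ i ∈ t, 0 < e i) :
    constantCoeff (∏ i ∈ t, (1 - (X : PowerSeries ℚ) ^ e i)) = 1 := by
  rw [map_prod]
  exact prod_eq_one fun i hi => const_fac _ (he i hi)

lemma prod_ne (t : Finset ℕ) (e : ℕ → ℕ) (he : ∀ i ∈ t, 0 < e i) :
    (∏ i ∈ t, (1 - (X : PowerSeries ℚ) ^ e i)) ≠ 0 := fun h => by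
  have := const_prod t e he
  rw [h, map_zero] at this
  exact zero_ne_one this

lemma prod_inv_eq (t : Finset ℕ) (e : ℕ → ℕ) (he : ∀ i ∈ t, 0 < e i) :
    (∏ i ∈ t, (1 - (X : PowerSeries ℚ) ^ e i))⁻¹ = ∏ i ∈ t, (1 - (X : PowerSeries ℚ) ^ e i)⁻¹ := by
  rw [PowerSeries.inv_eq_iff_mul_eq_one (by rw [const_prod t e he]; exact one_ne_zero)]
  rw [← prod_mul_distrib]
  exact prod_eq_one fun i hi => by rw [mul_comm]; exact fac_mul_inv _ (he i hi)

lemma Fser_eq_inv (L m : ℕ) :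
    Fser L m = (∏ i ∈ range L, (1 - (X : PowerSeries ℚ) ^ (m + 1 + i)))⁻¹ :=
  (prod_inv_eq _ _ fun i _ => by omega).symm

lemma Fser_mul_prod (L m : ℕ) :
    (∏ i ∈ range L, (1 - (X : PowerSeries ℚ) ^ (m + 1 + i))) * Fser L m = 1 := by
  rw [Fser_eq_inv]
  exact PowerSeries.mul_inv_cancel _ (by rw [const_prod _ _ fun i _ => by omega]; exact one_ne_zero)

lemma telescope (L m : ℕ) (hL : 0 < L) :
    (1 - (X : PowerSeries ℚ) ^ L) * Pser L (m + 1) = Fser L m - Fser L (m + 1) := by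
  have key : (1 - (X : PowerSeries ℚ) ^ (m + 1)) *
      (∏ i ∈ range L, (1 - (X : PowerSeries ℚ) ^ (m + 1 + 1 + i))) =
      (∏ i ∈ range L, (1 - (X : PowerSeries ℚ) ^ (m + 1 + i))) * (1 - X ^ (m + 1 + L)) := by
    rw [← prod_range_succ (fun i => 1 - (X : PowerSeries ℚ) ^ (m + 1 + i)) L,
      prod_range_succ' (fun i => 1 - (X : PowerSeries ℚ) ^ (m + 1 + i)) L]
    rw [mul_comm]
    congr 1
    refine prod_congr rfl fun i _ => ?_
    have e : m + 1 + (i + 1) = m + 1 + 1 + i := by omega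
    rw [e]
  rw [pow_add] at key
  have hcB : (1 - (X : PowerSeries ℚ) ^ (m + 1)) *
      (∏ i ∈ range L, (1 - (X : PowerSeries ℚ) ^ (m + 1 + 1 + i))) ≠ 0 :=
    mul_ne_zero (fac_ne _ (by omega)) (prod_ne _ _ fun i _ => by omega)
  apply mul_right_cancel₀ hcB
  have cc : (1 - (X : PowerSeries ℚ) ^ (m + 1)) * (1 - X ^ (m + 1))⁻¹ = 1 :=
    fac_mul_inv _ (by omega)
  have aF : (∏ i ∈ range L, (1 - (X : PowerSeries ℚ) ^ (m + 1 + i))) * Fser L m = 1 :=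
    Fser_mul_prod L m
  have bF : (∏ i ∈ range L, (1 - (X : PowerSeries ℚ) ^ (m + 1 + 1 + i))) * Fser L (m + 1) = 1 :=
    Fser_mul_prod L (m + 1)
  rw [Pser]
  show (1 - (X : PowerSeries ℚ) ^ L) *
      (X ^ (m + 1) * (1 - X ^ (m + 1))⁻¹ * Fser L (m + 1)) *
      ((1 - (X : PowerSeries ℚ) ^ (m + 1)) *
        (∏ i ∈ range L, (1 - (X : PowerSeries ℚ) ^ (m + 1 + 1 + i)))) =
    (Fser L m - Fser L (m + 1)) *
      ((1 - (X : PowerSeries ℚ) ^ (m + 1)) *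
        (∏ i ∈ range L, (1 - (X : PowerSeries ℚ) ^ (m + 1 + 1 + i))))
  linear_combination ((1 - (X : PowerSeries ℚ) ^ L) * X ^ (m + 1) *
      (∏ i ∈ range L, (1 - (X : PowerSeries ℚ) ^ (m + 1 + 1 + i))) * Fser L (m + 1)) * cc +
    ((1 - (X : PowerSeries ℚ) ^ L) * X ^ (m + 1)) * bF - Fser L m * key -
    (1 - X ^ (m + 1) * X ^ L) * aF + (1 - (X : PowerSeries ℚ) ^ (m + 1)) * bF

lemma parts_le {n : ℕ} (p : Nat.Partition n) {j : ℕ} (hj : j ∈ p.parts) : j ≤ n := by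
  obtain ⟨t, ht⟩ := Multiset.exists_cons_of_mem hj
  have hsum := p.parts_sum
  rw [ht, Multiset.sum_cons] at hsum
  omega

lemma Fser_coeff_large (L N n : ℕ) (h : n ≤ N) :
    coeff n (Fser L N) = coeff n (1 : PowerSeries ℚ) := by
  rw [← count_C L N n, PowerSeries.coeff_one]
  rcases Nat.eq_zero_or_pos n with rfl | hn
  · rw [if_pos rfl]
    have hfilter : (Finset.univ.filter fun p : Nat.Partition 0 =>
        ∀ j ∈ p.parts, N + 1 ≤ j ∧ j ≤ N + L) = Finset.univ := by
      refine filter_true_of_mem fun p _ => fun j hj => ?_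
      have := parts_le p hj
      have := p.parts_pos hj
      omega
    rw [hfilter]
    simp [Finset.card_univ]
  · rw [if_neg hn.ne']
    have hfilter : (Finset.univ.filter fun p : Nat.Partition n =>
        ∀ j ∈ p.parts, N + 1 ≤ j ∧ j ≤ N + L) = ∅ := by
      refine filter_false_of_mem fun p _ hp => ?_
      have hne : p.parts ≠ 0 := fun h0 => by
        have := p.parts_sum
        rw [h0] at this
        simp at this
        omega
      obtain ⟨j, hj⟩ := Multiset.exists_mem_of_ne_zero hne
      have h1 := (hp j hj).1
      have h2 := parts_le p hj
      omega
    rw [hfilter]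
    simp

lemma count_B (L s n N : ℕ) (hn : n ≤ N) :
    (Finset.univ.filter fun p : Nat.Partition n => p.parts ≠ 0 ∧ (∀ j ∈ p.parts, s + 1 ≤ j) ∧
        ∀ j ∈ p.parts, ∀ k ∈ p.parts, j ≤ k + L).card =
      ∑ m ∈ Finset.Icc (s + 1) N, (Finset.univ.filter fun p : Nat.Partition n =>
        m ∈ p.parts ∧ ∀ j ∈ p.parts, m ≤ j ∧ j ≤ m + L).card := by
  have hdisj : ∀ x ∈ Finset.Icc (s + 1) N, ∀ y ∈ Finset.Icc (s + 1) N, x ≠ y →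
      Disjoint (Finset.univ.filter fun p : Nat.Partition n =>
        x ∈ p.parts ∧ ∀ j ∈ p.parts, x ≤ j ∧ j ≤ x + L)
        (Finset.univ.filter fun p : Nat.Partition n =>
          y ∈ p.parts ∧ ∀ j ∈ p.parts, y ≤ j ∧ j ≤ y + L) := by
    intro x _ y _ hxy
    rw [Finset.disjoint_left]
    rintro p hpx hpy
    rw [mem_filter] at hpx hpy
    exact hxy (le_antisymm ((hpx.2.2 y hpy.2.1).1) ((hpy.2.2 x hpx.2.1).1))
  rw [← Finset.card_biUnion hdisj]
  congr 1
  ext p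
  simp only [mem_biUnion, mem_filter, mem_univ, true_and, Finset.mem_Icc]
  constructor
  · rintro ⟨hne, hge, hspread⟩
    obtain ⟨a, ha⟩ := Multiset.exists_mem_of_ne_zero hne
    have hne' : p.parts.toFinset.Nonempty := ⟨a, Multiset.mem_toFinset.mpr ha⟩
    set m := p.parts.toFinset.min' hne' with hm_def
    have hm : m ∈ p.parts := Multiset.mem_toFinset.mp (p.parts.toFinset.min'_mem hne')
    refine ⟨m, ⟨hge m hm, le_trans (parts_le p hm) hn⟩, hm, fun j hj => ?_⟩
    exact ⟨Finset.min'_le _ _ (Multiset.mem_toFinset.mpr hj), hspread j hj m hm⟩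
  · rintro ⟨m, ⟨hm1, _⟩, hmem, hp⟩
    refine ⟨fun h0 => by rw [h0] at hmem; exact absurd hmem (Multiset.notMem_zero m),
      fun j hj => by have := (hp j hj).1; omega, fun j hj k hk => ?_⟩
    have h1 := (hp j hj).2
    have h2 := (hp k hk).1
    omega

lemma coeff_mul_one_sub (f : PowerSeries ℚ) (L n : ℕ) :
    coeff n (f * (1 - X ^ L)) =
      coeff n f - (if L ≤ n then coeff (n - L) f else 0) := by
  rw [mul_sub, mul_one, map_sub, PowerSeries.coeff_mul_X_pow']

lemma mkB_eq (L s : ℕ) (hs : 0 < s) (hL : 0 < L) :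
    (PowerSeries.mk fun n => ((Finset.univ.filter fun p : Nat.Partition n =>
        p.parts ≠ 0 ∧ (∀ j ∈ p.parts, s + 1 ≤ j) ∧
          ∀ j ∈ p.parts, ∀ k ∈ p.parts, j ≤ k + L).card : ℚ)) * (1 - X ^ L) =
      Fser L s - 1 := by
  set mkB : PowerSeries ℚ := PowerSeries.mk fun n => ((Finset.univ.filter fun p : Nat.Partition n =>
      p.parts ≠ 0 ∧ (∀ j ∈ p.parts, s + 1 ≤ j) ∧
        ∀ j ∈ p.parts, ∀ k ∈ p.parts, j ≤ k + L).card : ℚ) with hmkB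
  apply PowerSeries.ext
  intro n
  set N := n + s + 1 with hN
  set S : PowerSeries ℚ := ∑ m ∈ Finset.Icc (s + 1) N, Pser L m with hS
  have claim1 : ∀ k, k ≤ n → coeff k mkB = coeff k S := by
    intro k hk
    rw [hmkB, coeff_mk, hS, map_sum]
    rw [count_B L s k N (by omega)]
    push_cast
    refine Finset.sum_congr rfl fun m hm => ?_
    rw [Finset.mem_Icc] at hm
    exact count_A L m k (by omega)
  have claim2 : S * (1 - X ^ L) = Fser L s - Fser L N := by
    rw [hS, Finset.sum_mul]
    have hmap : Finset.Icc (s + 1) N =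
        (range (N - s)).map ⟨fun i => s + 1 + i, add_right_injective (s + 1)⟩ := by
      ext x
      simp only [Finset.mem_Icc, mem_map, mem_range, Function.Embedding.coeFn_mk]
      constructor
      · intro hx
        exact ⟨x - (s + 1), by omega, by omega⟩
      · rintro ⟨i, hi, rfl⟩
        omega
    rw [hmap, Finset.sum_map]
    simp only [Function.Embedding.coeFn_mk]
    have step : ∀ i : ℕ, Pser L (s + 1 + i) * (1 - (X : PowerSeries ℚ) ^ L) =
        (fun i => Fser L (s + i)) i - (fun i => Fser L (s + i)) (i + 1) := by
      intro i
      have e : s + 1 + i = (s + i) + 1 := by omega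
      rw [e, mul_comm]
      exact telescope L (s + i) hL
    rw [Finset.sum_congr rfl fun i _ => step i]
    rw [Finset.sum_range_sub' (fun i => Fser L (s + i)) (N - s)]
    have e2 : s + (N - s) = N := by omega
    rw [e2, Nat.add_zero]
  calc coeff n (mkB * (1 - X ^ L))
      = coeff n mkB - (if L ≤ n then coeff (n - L) mkB else 0) :=
        coeff_mul_one_sub _ _ _
    _ = coeff n S - (if L ≤ n then coeff (n - L) S else 0) := by
        rw [claim1 n le_rfl]
        congr 1
        split_ifs with h
        · exact claim1 _ (by omega)
        · rfl
    _ = coeff n (S * (1 - X ^ L)) := (coeff_mul_one_sub _ _ _).symm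
    _ = coeff n (Fser L s - Fser L N) := by rw [claim2]
    _ = coeff n (Fser L s - 1) := by
        rw [map_sub, map_sub, Fser_coeff_large L N n (by omega)]

lemma card_subtype_A (s L n : ℕ) :
    Nat.card {p : Nat.Partition n // s ∈ p.parts ∧ ∀ j ∈ p.parts, s ≤ j ∧ j ≤ L + s} =
      (Finset.univ.filter fun p : Nat.Partition n =>
        s ∈ p.parts ∧ ∀ j ∈ p.parts, s ≤ j ∧ j ≤ s + L).card := by
  rw [Nat.card_eq_fintype_card, Fintype.card_subtype]
  congr 1
  apply Finset.filter_congr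
  intro p _
  constructor
  · rintro ⟨h1, h2⟩
    exact ⟨h1, fun j hj => by have := h2 j hj; omega⟩
  · rintro ⟨h1, h2⟩
    exact ⟨h1, fun j hj => by have := h2 j hj; omega⟩

lemma card_subtype_B (s L n : ℕ) :
    Nat.card {p : Nat.Partition n // p.parts ≠ 0 ∧ (∀ j ∈ p.parts, s + 1 ≤ j) ∧
        ∀ j ∈ p.parts, ∀ k ∈ p.parts, j ≤ k + L} =
      (Finset.univ.filter fun p : Nat.Partition n => p.parts ≠ 0 ∧ (∀ j ∈ p.parts, s + 1 ≤ j) ∧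
        ∀ j ∈ p.parts, ∀ k ∈ p.parts, j ≤ k + L).card := by
  rw [Nat.card_eq_fintype_card, Fintype.card_subtype]

end
end Stmt10Aux

open PowerSeries Finset Stmt10Aux
theorem stmt_10 (s L : ℕ) (hs : 0 < s) (hL : 0 < L) :
    (PowerSeries.mk fun n =>
        ((Nat.card {p : Nat.Partition n //
            s ∈ p.parts ∧ ∀ j ∈ p.parts, s ≤ j ∧ j ≤ L + s} : ℤ) -
         (Nat.card {p : Nat.Partition n //
            p.parts ≠ 0 ∧ (∀ j ∈ p.parts, s + 1 ≤ j) ∧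
              ∀ j ∈ p.parts, ∀ k ∈ p.parts, j ≤ k + L} : ℤ) : ℚ)) =
      (1 - (PowerSeries.X : PowerSeries ℚ) ^ L)⁻¹ *
        ((PowerSeries.X : PowerSeries ℚ) ^ s * (1 - (PowerSeries.X : PowerSeries ℚ) ^ L) *
            (∏ i ∈ Finset.range (L + 1), (1 - (PowerSeries.X : PowerSeries ℚ) ^ (s + i)))⁻¹ -
          ((∏ i ∈ Finset.range L, (1 - (PowerSeries.X : PowerSeries ℚ) ^ (s + 1 + i)))⁻¹ - 1)) := by
  classical
  have hLHS : (PowerSeries.mk fun n =>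
        ((Nat.card {p : Nat.Partition n //
            s ∈ p.parts ∧ ∀ j ∈ p.parts, s ≤ j ∧ j ≤ L + s} : ℤ) -
         (Nat.card {p : Nat.Partition n //
            p.parts ≠ 0 ∧ (∀ j ∈ p.parts, s + 1 ≤ j) ∧
              ∀ j ∈ p.parts, ∀ k ∈ p.parts, j ≤ k + L} : ℤ) : ℚ)) =
      (PowerSeries.mk fun n => ((Finset.univ.filter fun p : Nat.Partition n =>
          s ∈ p.parts ∧ ∀ j ∈ p.parts, s ≤ j ∧ j ≤ s + L).card : ℚ)) -
      (PowerSeries.mk fun n => ((Finset.univ.filter fun p : Nat.Partition n =>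
          p.parts ≠ 0 ∧ (∀ j ∈ p.parts, s + 1 ≤ j) ∧
            ∀ j ∈ p.parts, ∀ k ∈ p.parts, j ≤ k + L).card : ℚ)) := by
    apply PowerSeries.ext
    intro n
    rw [map_sub, coeff_mk, coeff_mk, coeff_mk, card_subtype_A s L n, card_subtype_B s L n]
    push_cast
    ring
  have hmkA : (PowerSeries.mk fun n => ((Finset.univ.filter fun p : Nat.Partition n =>
      s ∈ p.parts ∧ ∀ j ∈ p.parts, s ≤ j ∧ j ≤ s + L).card : ℚ)) = Pser L s := by
    apply PowerSeries.ext
    intro n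
    rw [coeff_mk]
    exact count_A L s n hs
  have hB' : (PowerSeries.mk fun n => ((Finset.univ.filter fun p : Nat.Partition n =>
      p.parts ≠ 0 ∧ (∀ j ∈ p.parts, s + 1 ≤ j) ∧
        ∀ j ∈ p.parts, ∀ k ∈ p.parts, j ≤ k + L).card : ℚ)) =
      (1 - (X : PowerSeries ℚ) ^ L)⁻¹ * (Fser L s - 1) := by
    have h1 := fac_mul_inv L hL
    have h2 := mkB_eq L s hs hL
    calc (PowerSeries.mk fun n => ((Finset.univ.filter fun p : Nat.Partition n =>
          p.parts ≠ 0 ∧ (∀ j ∈ p.parts, s + 1 ≤ j) ∧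
            ∀ j ∈ p.parts, ∀ k ∈ p.parts, j ≤ k + L).card : ℚ))
        = (PowerSeries.mk fun n => ((Finset.univ.filter fun p : Nat.Partition n =>
            p.parts ≠ 0 ∧ (∀ j ∈ p.parts, s + 1 ≤ j) ∧
              ∀ j ∈ p.parts, ∀ k ∈ p.parts, j ≤ k + L).card : ℚ)) *
          ((1 - (X : PowerSeries ℚ) ^ L) * (1 - X ^ L)⁻¹) := by rw [h1, mul_one]
      _ = ((PowerSeries.mk fun n => ((Finset.univ.filter fun p : Nat.Partition n =>
            p.parts ≠ 0 ∧ (∀ j ∈ p.parts, s + 1 ≤ j) ∧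
              ∀ j ∈ p.parts, ∀ k ∈ p.parts, j ≤ k + L).card : ℚ)) *
          (1 - (X : PowerSeries ℚ) ^ L)) * (1 - X ^ L)⁻¹ := by ring
      _ = (Fser L s - 1) * (1 - (X : PowerSeries ℚ) ^ L)⁻¹ := by rw [h2]
      _ = (1 - (X : PowerSeries ℚ) ^ L)⁻¹ * (Fser L s - 1) := mul_comm _ _
  have hD : (∏ i ∈ Finset.range (L + 1), (1 - (X : PowerSeries ℚ) ^ (s + i)))⁻¹ =
      Fser L s * (1 - (X : PowerSeries ℚ) ^ s)⁻¹ := by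
    rw [prod_inv_eq _ _ (fun i _ => by omega)]
    rw [prod_range_succ' (fun i => (1 - (X : PowerSeries ℚ) ^ (s + i))⁻¹) L]
    congr 1
    rw [Fser]
    refine prod_congr rfl fun i _ => ?_
    have e : s + (i + 1) = s + 1 + i := by omega
    rw [e]
  have hE : (∏ i ∈ Finset.range L, (1 - (X : PowerSeries ℚ) ^ (s + 1 + i)))⁻¹ = Fser L s :=
    (Fser_eq_inv L s).symm
  rw [hLHS, hmkA, hB', hD, hE, Pser]
  have h1 := fac_mul_inv L hL
  have key : (1 - (X : PowerSeries ℚ) ^ L)⁻¹ *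
      ((X : PowerSeries ℚ) ^ s * (1 - (X : PowerSeries ℚ) ^ L) *
        (Fser L s * (1 - (X : PowerSeries ℚ) ^ s)⁻¹)) =
      X ^ s * (1 - (X : PowerSeries ℚ) ^ s)⁻¹ * Fser L s := by
    calc (1 - (X : PowerSeries ℚ) ^ L)⁻¹ *
        ((X : PowerSeries ℚ) ^ s * (1 - (X : PowerSeries ℚ) ^ L) *
          (Fser L s * (1 - (X : PowerSeries ℚ) ^ s)⁻¹)) =
        (X ^ s * (1 - (X : PowerSeries ℚ) ^ s)⁻¹ * Fser L s) *
          ((1 - (X : PowerSeries ℚ) ^ L) * (1 - X ^ L)⁻¹) := by ring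
      _ = X ^ s * (1 - (X : PowerSeries ℚ) ^ s)⁻¹ * Fser L s := by rw [h1, mul_one]
  rw [mul_sub, mul_sub, key]
  ring
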